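/- Let p be a point sphere complex, f^p a point sphere (isotropic, ⟨f^p,p⟩ = 0), r isotropic with ⟨f^p,r⟩ = 0, and a ∈ ℝ^{4,2} with ⟨a,a⟩ ≠ 0, ⟨r,a⟩ = 0 and ⟨f^p,a⟩ ≠ 0. Let f̂^p be a nonzero isotropic vector in span{σ_a(f^p), r} with ⟨f̂^p,p⟩ = 0 and f̂^p ∉ span{r}, and set γ := span{f^p, f̂^p, r + ⟨r,p⟩p}, the circle of the cyclic circle congruence associated to the Ribaucour pair (span{f^p,r}, σ_a(span{f^p,r})). Then the vector e₁ := a + ⟨a,p⟩p, which spans span{a,p} ∩ p^⊥, satisfies ⟨e₁, v⟩ = 0 for every isotropic v ∈ γ^⊥; consequently, if the induced form on γ has signature (2,1), then e₁ ∈ γ, i.e. the space form vector determined by the evolution lies in the plane of the circle points of every circle of the congruence. Hence, in the space form determined by e₁, the circles of the congruence are geodesics and the Lamé family of the Dupin cyclidic system consists of parallel surfaces of that space form. -/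
import Mathlib


noncomputable section

/-- The symmetric bilinear form of signature (4,2) on ℝ⁶, modelling ℝ^{4,2}. -/
def B (x y : Fin 6 → ℝ) : ℝ :=
  x 0 * y 0 + x 1 * y 1 + x 2 * y 2 + x 3 * y 3 - x 4 * y 4 - x 5 * y 5

/-- The Lie inversion with respect to the linear sphere complex `a`. -/
def lieInv (a x : Fin 6 → ℝ) : Fin 6 → ℝ :=
  x - (2 * B x a / B a a) • a

/-- The induced form on the subspace `W` has signature (2,1) (it admits a
spanning pseudo-orthonormal triple of Gram matrix diag(1,1,-1)); in particular
`W` is 3-dimensional. -/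
def SigTwoOne (W : Submodule ℝ (Fin 6 → ℝ)) : Prop :=
  ∃ u v w : Fin 6 → ℝ, Submodule.span ℝ ({u, v, w} : Set (Fin 6 → ℝ)) = W ∧
    B u u = 1 ∧ B v v = 1 ∧ B w w = -1 ∧ B u v = 0 ∧ B u w = 0 ∧ B v w = 0

lemma B_add_left (x y z : Fin 6 → ℝ) : B (x + y) z = B x z + B y z := by
  simp [B]; ring

lemma B_smul_left (c : ℝ) (x z : Fin 6 → ℝ) : B (c • x) z = c * B x z := by
  simp [B]; ring

/-- The orthogonal complement of a single vector with respect to `B`. -/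
def perpVec (u : Fin 6 → ℝ) : Submodule ℝ (Fin 6 → ℝ) where
  carrier := {x | B x u = 0}
  add_mem' := fun {a b} ha hb => by
    simp only [Set.mem_setOf_eq] at *
    rw [B_add_left, ha, hb, add_zero]
  zero_mem' := by simp [B]
  smul_mem' := fun c x hx => by
    simp only [Set.mem_setOf_eq] at *
    rw [B_smul_left, hx, mul_zero]

lemma B_symm (x y : Fin 6 → ℝ) : B x y = B y x := by
  simp [B]; ring

lemma B_sub_left (x y z : Fin 6 → ℝ) : B (x - y) z = B x z - B y z := by
  simp [B]; ring

lemma B_add_right (x y z : Fin 6 → ℝ) : B x (y + z) = B x y + B x z := by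
  simp [B]; ring

lemma B_smul_right (c : ℝ) (x z : Fin 6 → ℝ) : B x (c • z) = c * B x z := by
  simp [B]; ring

lemma B_sub_right (x y z : Fin 6 → ℝ) : B x (y - z) = B x y - B x z := by
  simp [B]; ring

/-- key scalar lemma: any vector orthogonal to the three generators of γ is
orthogonal to e₁. -/
lemma key (p fp r a fq : Fin 6 → ℝ) (hfpp : B fp p = 0)
    (ha : B a a ≠ 0) (hfa : B fp a ≠ 0) (hfqp : B fq p = 0)
    (hfqmem : fq ∈ Submodule.span ℝ ({lieInv a fp, r} : Set (Fin 6 → ℝ)))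
    (hfqr : fq ∉ Submodule.span ℝ ({r} : Set (Fin 6 → ℝ)))
    (v : Fin 6 → ℝ) (h1 : B fp v = 0) (h2 : B fq v = 0)
    (h3 : B (r + B r p • p) v = 0) :
    B a v + B a p * B p v = 0 := by
  obtain ⟨α, β, hαβ⟩ := Submodule.mem_span_pair.mp hfqmem
  set c : ℝ := 2 * B fp a / B a a with hc
  have hcne : c ≠ 0 := by
    simp [hc]; exact ⟨hfa, ha⟩
  have hαne : α ≠ 0 := by
    intro h0
    apply hfqr
    rw [← hαβ, h0, zero_smul, zero_add]
    exact Submodule.mem_span_singleton.mpr ⟨β, rfl⟩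
  have expand : ∀ x, B fq x = α * (B fp x - c * B a x) + β * B r x := by
    intro x
    rw [← hαβ, B_add_left, B_smul_left, B_smul_left]
    rw [show lieInv a fp = fp - c • a from rfl, B_sub_left, B_smul_left]
  have e1 : α * (B fp p - c * B a p) + β * B r p = 0 := by
    rw [← expand]; exact hfqp
  have e2 : α * (B fp v - c * B a v) + β * B r v = 0 := by
    rw [← expand]; exact h2
  have e3 : B r v + B r p * B p v = 0 := by
    rw [B_add_left, B_smul_left] at h3; exact h3
  have h4 : α * c * (B a v + B a p * B p v) = 0 := by
    linear_combination (-1 : ℝ) * e2 - B p v * e1 + β * e3 + α * h1 + (α * B p v) * hfpp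
  rcases mul_eq_zero.mp h4 with h | h
  · exact absurd h (mul_ne_zero hαne hcne)
  · exact h

/-- With the circle `γ = span{fp, fq, r + ⟨r,p⟩p}` of the
cyclic circle congruence associated to the Ribaucour pair `(span{fp,r},
σ_a(span{fp,r}))`: the space form vector `e₁ = a + ⟨a,p⟩p` spans
`span{a,p} ∩ p^⊥`, is orthogonal to every isotropic vector of `γ^⊥`, and —
provided `γ` has signature (2,1) — lies in `γ` itself; i.e. the circles of the
congruence are geodesics of the space form determined by `e₁`, so the Lamé
family consists of parallel surfaces in that space form. -/
theorem stmt_12 (p fp r a : Fin 6 → ℝ) (hp : B p p = -1)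
    (hfp : fp ≠ 0) (ifp : B fp fp = 0) (hfpp : B fp p = 0)
    (hr : r ≠ 0) (ir : B r r = 0) (hfr : B fp r = 0)
    (ha : B a a ≠ 0) (hra : B r a = 0) (hfa : B fp a ≠ 0)
    (fq : Fin 6 → ℝ) (hfq : fq ≠ 0) (ifq : B fq fq = 0) (hfqp : B fq p = 0)
    (hfqmem : fq ∈ Submodule.span ℝ ({lieInv a fp, r} : Set (Fin 6 → ℝ)))
    (hfqr : fq ∉ Submodule.span ℝ ({r} : Set (Fin 6 → ℝ)))
    (γ : Submodule ℝ (Fin 6 → ℝ))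
    (hγ : γ = Submodule.span ℝ ({fp, fq, r + B r p • p} : Set (Fin 6 → ℝ)))
    (e₁ : Fin 6 → ℝ) (he₁ : e₁ = a + B a p • p) :
    Submodule.span ℝ ({e₁} : Set (Fin 6 → ℝ)) =
        Submodule.span ℝ ({a, p} : Set (Fin 6 → ℝ)) ⊓ perpVec p ∧
    (∀ v : Fin 6 → ℝ, v ≠ 0 → B v v = 0 → (∀ x ∈ γ, B v x = 0) →
      B e₁ v = 0) ∧
    (SigTwoOne γ → e₁ ∈ γ) := by
  -- generators of γ
  have hfpγ : fp ∈ γ := by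
    rw [hγ]; exact Submodule.subset_span (by simp)
  have hfqγ : fq ∈ γ := by
    rw [hγ]; exact Submodule.subset_span (by simp)
  have hrγ : r + B r p • p ∈ γ := by
    rw [hγ]; exact Submodule.subset_span (by simp)
  -- the central orthogonality fact
  have main : ∀ Q : Fin 6 → ℝ, (∀ x ∈ γ, B x Q = 0) → B e₁ Q = 0 := by
    intro Q hQ
    have h1 : B fp Q = 0 := hQ _ hfpγ
    have h2 : B fq Q = 0 := hQ _ hfqγ
    have h3 : B (r + B r p • p) Q = 0 := hQ _ hrγ
    have := key p fp r a fq hfpp ha hfa hfqp hfqmem hfqr Q h1 h2 h3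
    rw [he₁, B_add_left, B_smul_left]
    linarith
  refine ⟨?_, ?_, ?_⟩
  · -- span e₁ = span{a,p} ⊓ p^⊥
    apply le_antisymm
    · rw [Submodule.span_le, Set.singleton_subset_iff]
      refine ⟨Submodule.mem_span_pair.mpr ⟨1, B a p, by rw [he₁, one_smul]⟩, ?_⟩
      show B e₁ p = 0
      rw [he₁, B_add_left, B_smul_left, hp]
      ring
    · rintro x ⟨hx1, hx2⟩
      obtain ⟨s, t, hst⟩ := Submodule.mem_span_pair.mp hx1
      have hxp : B x p = 0 := hx2
      rw [← hst, B_add_left, B_smul_left, B_smul_left, hp] at hxp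
      have ht : t = s * B a p := by linarith
      refine Submodule.mem_span_singleton.mpr ⟨s, ?_⟩
      rw [he₁, ← hst, ht, smul_add, smul_smul]
  · intro v _ _ hv
    exact main v (fun x hx => by rw [B_symm]; exact hv x hx)
  · rintro ⟨u, v, w, hspan, huu, hvv, hww, huv, huw, hvw⟩
    have huγ : u ∈ γ := by rw [← hspan]; exact Submodule.subset_span (by simp)
    have hvγ : v ∈ γ := by rw [← hspan]; exact Submodule.subset_span (by simp)
    have hwγ : w ∈ γ := by rw [← hspan]; exact Submodule.subset_span (by simp)
    set cu := B e₁ u with hcu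
    set cv := B e₁ v with hcv
    set cw := B e₁ w with hcw
    set e : Fin 6 → ℝ := cu • u + cv • v + (-cw) • w with he
    have heγ : e ∈ γ := by
      exact Submodule.add_mem _ (Submodule.add_mem _ (Submodule.smul_mem _ _ huγ)
        (Submodule.smul_mem _ _ hvγ)) (Submodule.smul_mem _ _ hwγ)
    set z : Fin 6 → ℝ := e₁ - e with hz
    -- z is orthogonal to u, v, w
    have hBe : ∀ x, B e x = cu * B u x + cv * B v x - cw * B w x := by
      intro x
      rw [he, B_add_left, B_add_left, B_smul_left, B_smul_left, B_smul_left]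
      ring
    have hzu : B z u = 0 := by
      rw [hz, B_sub_left, hBe, huu, B_symm v u, huv, B_symm w u, huw]; ring
    have hzv : B z v = 0 := by
      rw [hz, B_sub_left, hBe, hvv, huv, B_symm w v, hvw]; ring
    have hzw : B z w = 0 := by
      rw [hz, B_sub_left, hBe, hww, huw, hvw]; ring
    -- z is orthogonal to everything
    have hall : ∀ x : Fin 6 → ℝ, B z x = 0 := by
      intro x
      set P : Fin 6 → ℝ := (B x u) • u + (B x v) • v + (-(B x w)) • w with hP
      have hBP : ∀ y, B P y = B x u * B u y + B x v * B v y - B x w * B w y := by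
        intro y
        rw [hP, B_add_left, B_add_left, B_smul_left, B_smul_left, B_smul_left]
        ring
      set Q : Fin 6 → ℝ := x - P with hQdef
      -- Q ⊥ u, v, w
      have hQu : B Q u = 0 := by
        rw [hQdef, B_sub_left, hBP, huu, B_symm v u, huv, B_symm w u, huw]; ring
      have hQv : B Q v = 0 := by
        rw [hQdef, B_sub_left, hBP, hvv, huv, B_symm w v, hvw]; ring
      have hQw : B Q w = 0 := by
        rw [hQdef, B_sub_left, hBP, hww, huw, hvw]; ring
      -- hence Q ⊥ γ
      have hγQ : ∀ y ∈ γ, B y Q = 0 := by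
        intro y hy
        have hle : γ ≤ perpVec Q := by
          rw [← hspan, Submodule.span_le]
          rintro t ht
          simp only [Set.mem_insert_iff, Set.mem_singleton_iff] at ht
          rcases ht with rfl | rfl | rfl
          · show B t Q = 0; rw [B_symm]; exact hQu
          · show B t Q = 0; rw [B_symm]; exact hQv
          · show B t Q = 0; rw [B_symm]; exact hQw
        exact hle hy
      have hzQ : B z Q = 0 := by
        rw [hz, B_sub_left, main Q hγQ, hBe, B_symm u Q, B_symm v Q, B_symm w Q,
          hQu, hQv, hQw]
        ring
      have hxPQ : x = P + Q := by rw [hQdef]; abel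
      rw [hxPQ, B_add_right, hzQ, hP, B_add_right, B_add_right, B_smul_right,
        B_smul_right, B_smul_right, hzu, hzv, hzw]
      ring
    -- from orthogonality to everything, z = 0
    have hz0 : z = 0 := by
      clear_value z
      clear hz hzu hzv hzw
      funext i
      fin_cases i
      · simpa [B] using hall (fun j => if j = 0 then 1 else 0)
      · simpa [B] using hall (fun j => if j = 1 then 1 else 0)
      · simpa [B] using hall (fun j => if j = 2 then 1 else 0)
      · simpa [B] using hall (fun j => if j = 3 then 1 else 0)
      · have h := hall (fun j => if j = 4 then 1 else 0); simp [B] at h; simpa using h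
      · have h := hall (fun j => if j = 5 then 1 else 0); simp [B] at h; simpa using h
    have : e₁ = e := by
      have := sub_eq_zero.mp hz0
      exact this
    rw [this]
    exact heγ
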